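/- Let g₁, g₂ be nonzero, non-parallel vectors in a real inner product space, U(v) = v/‖v‖, O(u,v) = v - (⟪u,v⟫/‖u‖²)·u, and g_v = U(O(g₁,g₂)) + U(O(g₂,g₁)). Then ⟪U(g₁), g_v⟫ = ⟪U(g₂), g_v⟫ = √(1 - S_c(g₁,g₂)²) > 0. In particular g_v has equal, strictly positive projection length onto both unit vectors U(g₁) and U(g₂). -/

import Mathlib

open scoped RealInnerProductSpace

theorem stmt_5 {E : Type*} [NormedAddCommGroup E] [InnerProductSpace ℝ E]
    (g₁ g₂ : E) (h₁ : g₁ ≠ 0) (h₂ : g₂ ≠ 0)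
    (hli : LinearIndependent ℝ ![g₁, g₂]) :
    let O : E → E → E := fun u v => v - (⟪u, v⟫ / ‖u‖ ^ 2) • u
    let U : E → E := fun v => ‖v‖⁻¹ • v
    let gv : E := U (O g₁ g₂) + U (O g₂ g₁)
    ⟪U g₁, gv⟫ = Real.sqrt (1 - (⟪g₁, g₂⟫ / (‖g₁‖ * ‖g₂‖)) ^ 2) ∧
    ⟪U g₂, gv⟫ = Real.sqrt (1 - (⟪g₁, g₂⟫ / (‖g₁‖ * ‖g₂‖)) ^ 2) ∧
    0 < Real.sqrt (1 - (⟪g₁, g₂⟫ / (‖g₁‖ * ‖g₂‖)) ^ 2) := by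
  intro O U gv
  have ha : (0:ℝ) < ‖g₁‖ := norm_pos_iff.mpr h₁
  have hb : (0:ℝ) < ‖g₂‖ := norm_pos_iff.mpr h₂
  set a := ‖g₁‖
  set b := ‖g₂‖
  set p := ⟪g₁, g₂⟫ with hp
  have hpair := LinearIndependent.pair_iff.mp hli
  have habs : |p| < a * b := by
    rcases abs_cases p with ⟨h, _⟩ | ⟨h, _⟩ <;> rw [h]
    · refine inner_lt_norm_mul_iff_real.mpr ?_
      intro hc
      have := (hpair b (-a) (by rw [neg_smul, ← hc]; abel)).1
      exact absurd this hb.ne'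
    · have : ⟪-g₁, g₂⟫ < ‖-g₁‖ * b := by
        refine inner_lt_norm_mul_iff_real.mpr ?_
        intro hc
        rw [norm_neg, smul_neg] at hc
        have := (hpair b a (by rw [← neg_eq_iff_eq_neg.mpr hc.symm]; abel)).1
        exact absurd this hb.ne'
      rw [inner_neg_left, norm_neg] at this
      linarith
  have hp2 : p ^ 2 < (a * b) ^ 2 := by nlinarith [abs_nonneg p, sq_abs p]
  -- the orthogonalized vectors
  have hOg1 : O g₁ g₂ = g₂ - (p / a ^ 2) • g₁ := rfl
  have hOg2 : O g₂ g₁ = g₁ - (⟪g₂, g₁⟫ / b ^ 2) • g₂ := rfl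
  have hsymm : ⟪g₂, g₁⟫ = p := (real_inner_comm g₂ g₁).symm
  have hna : ⟪g₁, g₁⟫ = a ^ 2 := real_inner_self_eq_norm_sq g₁
  have hnb : ⟪g₂, g₂⟫ = b ^ 2 := real_inner_self_eq_norm_sq g₂
  -- inner products
  have i11 : ⟪g₁, O g₁ g₂⟫ = 0 := by
    rw [hOg1, inner_sub_right, real_inner_smul_right, hna, hp]
    field_simp
    ring
  have i12 : ⟪g₁, O g₂ g₁⟫ = a ^ 2 - p ^ 2 / b ^ 2 := by
    rw [hOg2, inner_sub_right, real_inner_smul_right, hsymm, hna, hp]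
    ring
  have i22 : ⟪g₂, O g₂ g₁⟫ = 0 := by
    rw [hOg2, inner_sub_right, real_inner_smul_right, hsymm, hnb]
    field_simp
    ring
  have i21 : ⟪g₂, O g₁ g₂⟫ = b ^ 2 - p ^ 2 / a ^ 2 := by
    rw [hOg1, inner_sub_right, real_inner_smul_right, hnb, hsymm]
    ring
  have hw2 : ‖O g₂ g₁‖ ^ 2 = a ^ 2 - p ^ 2 / b ^ 2 := by
    rw [← real_inner_self_eq_norm_sq, hOg2, inner_sub_left, real_inner_smul_left,
      ← hOg2, i12, i22]
    ring
  have hw1 : ‖O g₁ g₂‖ ^ 2 = b ^ 2 - p ^ 2 / a ^ 2 := by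
    rw [← real_inner_self_eq_norm_sq, hOg1, inner_sub_left, real_inner_smul_left,
      ← hOg1, i21, i11]
    ring
  have hpos2 : (0:ℝ) < a ^ 2 - p ^ 2 / b ^ 2 := by
    rw [sub_pos, div_lt_iff₀ (by positivity)]
    nlinarith
  have hpos1 : (0:ℝ) < b ^ 2 - p ^ 2 / a ^ 2 := by
    rw [sub_pos, div_lt_iff₀ (by positivity)]
    nlinarith
  have hn2 : (0:ℝ) < ‖O g₂ g₁‖ := by nlinarith [norm_nonneg (O g₂ g₁)]
  have hn1 : (0:ℝ) < ‖O g₁ g₂‖ := by nlinarith [norm_nonneg (O g₁ g₂)]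
  have e1 : ⟪U g₁, gv⟫ = a⁻¹ * ‖O g₂ g₁‖ := by
    show ⟪a⁻¹ • g₁, ‖O g₁ g₂‖⁻¹ • O g₁ g₂ + ‖O g₂ g₁‖⁻¹ • O g₂ g₁⟫ = _
    rw [inner_add_right, real_inner_smul_left, real_inner_smul_left,
      real_inner_smul_right, real_inner_smul_right, i11, i12, ← hw2]
    field_simp
    ring
  have e2 : ⟪U g₂, gv⟫ = b⁻¹ * ‖O g₁ g₂‖ := by
    show ⟪b⁻¹ • g₂, ‖O g₁ g₂‖⁻¹ • O g₁ g₂ + ‖O g₂ g₁‖⁻¹ • O g₂ g₁⟫ = _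
    rw [inner_add_right, real_inner_smul_left, real_inner_smul_left,
      real_inner_smul_right, real_inner_smul_right, i21, i22, ← hw1]
    field_simp
    ring
  have s1 : Real.sqrt (1 - (p / (a * b)) ^ 2) = a⁻¹ * ‖O g₂ g₁‖ := by
    have : 1 - (p / (a * b)) ^ 2 = (a⁻¹ * ‖O g₂ g₁‖) ^ 2 := by
      rw [mul_pow, hw2]
      field_simp
    rw [this, Real.sqrt_sq (by positivity)]
  have s2 : Real.sqrt (1 - (p / (a * b)) ^ 2) = b⁻¹ * ‖O g₁ g₂‖ := by
    have : 1 - (p / (a * b)) ^ 2 = (b⁻¹ * ‖O g₁ g₂‖) ^ 2 := by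
      rw [mul_pow, hw1]
      field_simp
    rw [this, Real.sqrt_sq (by positivity)]
  refine ⟨by rw [e1, s1], by rw [e2, s2], ?_⟩
  rw [s1]
  positivity
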